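/- Exact state preparation: for N = 2^L and any unit-norm c ∈ ℂ^N, choosing split angles α_{ℓ,i} = atan2(r_{ℓ+1,2i}, r_{ℓ+1,2i−1}) (set to 0 when r_{ℓ,i} = 0) from the subtree norms of c, and output phases ϑ_n = arg c_n − (π/2) w_n (arbitrary when c_n = 0), the split-then-phase network satisfies diag(e^{iϑ₁},…,e^{iϑ_N}) · V_mag(α) · e₁ = c. -/

import Mathlib

open Matrix Complex

/-- Embedded 2×2 splitter: identity on `ℂ^N` except on the (0-based) rows/columns
`{m, n}`, where the principal 2×2 block is `[[cos α, i sin α], [i sin α, cos α]]`. -/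
noncomputable def UsubN (N m n : ℕ) (α : ℝ) : Matrix (Fin N) (Fin N) ℂ :=
  Matrix.of fun u v =>
    if ((u : ℕ) = m ∧ (v : ℕ) = m) ∨ ((u : ℕ) = n ∧ (v : ℕ) = n) then (Real.cos α : ℂ)
    else if ((u : ℕ) = m ∧ (v : ℕ) = n) ∨ ((u : ℕ) = n ∧ (v : ℕ) = m) then
      Complex.I * Real.sin α
    else if u = v then 1 else 0

/-- 0-based entry index of node `(ℓ, i)` (with 1-based `ℓ, i`):
`p(ℓ,i) − 1 = (i−1)·2^{L−ℓ+1}`. -/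
def pIdx (L ℓ i : ℕ) : ℕ := (i - 1) * 2 ^ (L + 1 - ℓ)

/-- 0-based split-partner index of node `(ℓ, i)`: `q(ℓ,i) − 1 = p(ℓ,i) − 1 + 2^{L−ℓ}`. -/
def qIdx (L ℓ i : ℕ) : ℕ := pIdx L ℓ i + 2 ^ (L - ℓ)

/-- Layer matrix `U_ℓ`: the (commuting) product over `i = 1,…,2^{ℓ−1}` of the embedded
splitters `U_{p(ℓ,i), q(ℓ,i)}(α_{ℓ,i})`. -/
noncomputable def layerU (L : ℕ) (α : ℕ → ℕ → ℝ) (ℓ : ℕ) :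
    Matrix (Fin (2 ^ L)) (Fin (2 ^ L)) ℂ :=
  (List.ofFn fun i : Fin (2 ^ (ℓ - 1)) =>
    UsubN (2 ^ L) (pIdx L ℓ ((i : ℕ) + 1)) (qIdx L ℓ ((i : ℕ) + 1)) (α ℓ ((i : ℕ) + 1))).prod

/-- Magnitude-tree unitary `V_mag(α) = U_L · U_{L−1} ⋯ U_1`. -/
noncomputable def Vmag (L : ℕ) (α : ℕ → ℕ → ℝ) :
    Matrix (Fin (2 ^ L)) (Fin (2 ^ L)) ℂ :=
  (List.ofFn fun ℓ : Fin L => layerU L α (L - (ℓ : ℕ))).prod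

/-- First standard basis vector `e₁` of `ℂ^N` (0-based index `0`). -/
def e1 (N : ℕ) : Fin N → ℂ := fun j => if (j : ℕ) = 0 then 1 else 0

/-- `atan2 y x` for `x, y ≥ 0` (angle in `[0, π/2]`), via the complex argument. -/
noncomputable def atan2 (y x : ℝ) : ℝ := Complex.arg ((x : ℂ) + (y : ℂ) * Complex.I)

/-- Subtree norm `r_{ℓ,i}` of `c ∈ ℂ^{2^L}` (0-based entries) over the contiguous
dyadic block of 0-based indices `[(i−1)·2^{L+1−ℓ}, i·2^{L+1−ℓ})` (1-based `ℓ, i`). -/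
noncomputable def rnorm (L : ℕ) (c : Fin (2 ^ L) → ℂ) (ℓ i : ℕ) : ℝ :=
  Real.sqrt (∑ n : Fin (2 ^ L),
    if (i - 1) * 2 ^ (L + 1 - ℓ) ≤ (n : ℕ) ∧ (n : ℕ) < i * 2 ^ (L + 1 - ℓ)
    then ‖c n‖ ^ 2 else 0)

/-- Split-programming rule: `α_{ℓ,i} = atan2(r_{ℓ+1,2i}, r_{ℓ+1,2i−1})`
(set to `0` when `r_{ℓ,i} = 0`). -/
noncomputable def splitAngle (L : ℕ) (c : Fin (2 ^ L) → ℂ) (ℓ i : ℕ) : ℝ :=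
  if rnorm L c ℓ i = 0 then 0
  else atan2 (rnorm L c (ℓ + 1) (2 * i)) (rnorm L c (ℓ + 1) (2 * i - 1))

/-- Output phase-bank rule: `ϑ_n = arg c_n − (π/2)·w_n`, where `w_n` is the Hamming
weight of the binary expansion of `n − 1` (0-based index `n`). -/
noncomputable def phaseChoice (L : ℕ) (c : Fin (2 ^ L) → ℂ) (n : Fin (2 ^ L)) : ℝ :=
  (c n).arg - Real.pi / 2 * ((Nat.digits 2 (n : ℕ)).sum : ℝ)

lemma UsubN_mulVec {N m n : ℕ} (hm : m < N) (hn : n < N) (hmn : m ≠ n) (α : ℝ)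
    (v : Fin N → ℂ) (u : Fin N) :
    (UsubN N m n α).mulVec v u =
      if (u : ℕ) = m then (Real.cos α : ℂ) * v ⟨m, hm⟩ + Complex.I * Real.sin α * v ⟨n, hn⟩
      else if (u : ℕ) = n then Complex.I * Real.sin α * v ⟨m, hm⟩ + (Real.cos α : ℂ) * v ⟨n, hn⟩
      else v u := by
  have key : ∀ w : Fin N, UsubN N m n α u w * v w =
      ((if w = ⟨m, hm⟩ then (if (u:ℕ) = m then (Real.cos α : ℂ) else if (u:ℕ) = n then Complex.I * Real.sin α else if u = w then 1 else 0) * v w else 0)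
      + (if w = ⟨n, hn⟩ then (if (u:ℕ) = n then (Real.cos α : ℂ) else if (u:ℕ) = m then Complex.I * Real.sin α else if u = w then 1 else 0) * v w else 0))
      + (if (w:ℕ) ≠ m ∧ (w:ℕ) ≠ n then (if u = w then 1 else 0) * v w else 0) := by
    intro w
    have hwm : w = ⟨m, hm⟩ ↔ (w : ℕ) = m := by
      constructor
      · rintro rfl; rfl
      · intro h; exact Fin.ext h
    have hwn : w = ⟨n, hn⟩ ↔ (w : ℕ) = n := by
      constructor
      · rintro rfl; rfl
      · intro h; exact Fin.ext h
    simp only [UsubN, Matrix.of_apply]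
    by_cases h1 : (w : ℕ) = m
    · simp only [hwm.mpr h1, if_pos rfl, hwn, h1, hmn, h1 ▸ hmn, and_true, not_true, false_and,
        if_neg, add_zero]
      have hwn' : ¬ (w:ℕ) = n := h1 ▸ hmn
      simp only [hwn', if_false, and_false, false_and, and_true, or_false, false_or, if_neg,
        not_false_iff, add_zero]
      by_cases h2 : (u:ℕ) = m
      · simp [h2, hmn]
      · by_cases h3 : (u:ℕ) = n
        · simp [h2, h3, hmn]
        · simp [h2, h3, hmn]
    · by_cases h2 : (w : ℕ) = n
      · have : ¬ w = ⟨m, hm⟩ := fun h => h1 (by rw [h])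
        simp only [this, if_neg, not_false_iff, hwn.mpr h2, if_pos rfl, zero_add, h1, h2,
          and_false, false_and, and_true, or_false, false_or, not_true, false_or]
        have hnm : ¬ (u:ℕ) = m ∨ True := Or.inr trivial
        by_cases h3 : (u:ℕ) = n
        · have : ¬ (u:ℕ) = m := h3 ▸ (Ne.symm hmn)
          simp [h3, this, hmn, Ne.symm hmn]
        · by_cases h4 : (u:ℕ) = m
          · simp [h3, h4, hmn, Ne.symm hmn]
          · simp [h3, h4, hmn, Ne.symm hmn]
      · have hm' : ¬ w = ⟨m, hm⟩ := fun h => h1 (by rw [h])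
        have hn' : ¬ w = ⟨n, hn⟩ := fun h => h2 (by rw [h])
        simp [hm', hn', h1, h2]
  rw [Matrix.mulVec, dotProduct]
  simp only [key]
  rw [Finset.sum_add_distrib, Finset.sum_add_distrib, Finset.sum_ite_eq', Finset.sum_ite_eq']
  simp only [Finset.mem_univ, if_pos]
  by_cases h2 : (u:ℕ) = m
  · have hun : ¬ (u:ℕ) = n := h2 ▸ hmn
    rw [if_pos h2]
    have : ∀ w : Fin N, (if (w:ℕ) ≠ m ∧ (w:ℕ) ≠ n then (if u = w then 1 else 0) * v w else 0) = 0 := by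
      intro w
      by_cases hw : (w:ℕ) ≠ m ∧ (w:ℕ) ≠ n
      · rw [if_pos hw]
        have : ¬ u = w := fun h => hw.1 (h ▸ h2)
        simp [this]
      · rw [if_neg hw]
    simp only [this, Finset.sum_const_zero, add_zero]
    simp [h2, hun, hmn, Ne.symm hmn]
  · by_cases h3 : (u:ℕ) = n
    · rw [if_neg h2, if_pos h3]
      have : ∀ w : Fin N, (if (w:ℕ) ≠ m ∧ (w:ℕ) ≠ n then (if u = w then 1 else 0) * v w else 0) = 0 := by
        intro w
        by_cases hw : (w:ℕ) ≠ m ∧ (w:ℕ) ≠ n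
        · rw [if_pos hw]
          have : ¬ u = w := fun h => hw.2 (h ▸ h3)
          simp [this]
        · rw [if_neg hw]
      simp only [this, Finset.sum_const_zero, add_zero]
      simp [h2, h3, hmn, Ne.symm hmn]
    · rw [if_neg h2, if_neg h3]
      have : ∀ w : Fin N, (if (w:ℕ) ≠ m ∧ (w:ℕ) ≠ n then (if u = w then 1 else 0) * v w else 0)
          = (if w = u then v w else 0) := by
        intro w
        by_cases hw : w = u
        · subst hw
          rw [if_pos ⟨h2, h3⟩, if_pos rfl, one_mul, if_pos rfl]
        · rw [if_neg hw]
          by_cases hw2 : (w:ℕ) ≠ m ∧ (w:ℕ) ≠ n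
          · rw [if_pos hw2, if_neg (fun h => hw h.symm), zero_mul]
          · rw [if_neg hw2]
      simp only [this, Finset.sum_ite_eq', Finset.mem_univ, if_pos]
      have hum : ¬ u = ⟨m, hm⟩ := fun h => h2 (by rw [h])
      have hun : ¬ u = ⟨n, hn⟩ := fun h => h3 (by rw [h])
      simp [hum, hun, h2, h3]

lemma rnorm_nonneg (L : ℕ) (c : Fin (2 ^ L) → ℂ) (ℓ i : ℕ) : 0 ≤ rnorm L c ℓ i :=
  Real.sqrt_nonneg _

lemma rnorm_sq (L : ℕ) (c : Fin (2 ^ L) → ℂ) (ℓ i : ℕ) :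
    (rnorm L c ℓ i) ^ 2 = ∑ n : Fin (2 ^ L),
      if (i - 1) * 2 ^ (L + 1 - ℓ) ≤ (n : ℕ) ∧ (n : ℕ) < i * 2 ^ (L + 1 - ℓ)
      then ‖c n‖ ^ 2 else 0 := by
  rw [rnorm, Real.sq_sqrt]
  apply Finset.sum_nonneg
  intro n _
  positivity

lemma rnorm_sq_split (L : ℕ) (c : Fin (2 ^ L) → ℂ) (ℓ i : ℕ) (hℓ : ℓ ≤ L) (hi : 1 ≤ i) :
    (rnorm L c ℓ i) ^ 2 =
      (rnorm L c (ℓ + 1) (2 * i - 1)) ^ 2 + (rnorm L c (ℓ + 1) (2 * i)) ^ 2 := by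
  rw [rnorm_sq, rnorm_sq, rnorm_sq, ← Finset.sum_add_distrib]
  apply Finset.sum_congr rfl
  intro n _
  set a := 2 ^ (L + 1 - (ℓ + 1)) with ha
  have hexp : 2 ^ (L + 1 - ℓ) = 2 * a := by
    rw [ha]
    have h1 : L + 1 - ℓ = (L + 1 - (ℓ + 1)) + 1 := by omega
    rw [h1, pow_succ]
    ring
  have hA : (i - 1) * 2 ^ (L + 1 - ℓ) = (2 * i - 1 - 1) * a := by
    rw [hexp]
    have h2 : (i - 1) * 2 = 2 * i - 1 - 1 := by omega
    calc (i - 1) * (2 * a) = ((i - 1) * 2) * a := by ring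
    _ = _ := by rw [h2]
  have hB : (2 * i - 1 - 1) * a + a = (2 * i - 1) * a := by
    have : (2 * i - 1 - 1) + 1 = 2 * i - 1 := by omega
    calc (2 * i - 1 - 1) * a + a = ((2 * i - 1 - 1) + 1) * a := by ring
    _ = _ := by rw [this]
  have hC : (2 * i - 1) * a + a = i * 2 ^ (L + 1 - ℓ) := by
    rw [hexp]
    have : (2 * i - 1) + 1 = 2 * i := by omega
    calc (2 * i - 1) * a + a = ((2 * i - 1) + 1) * a := by ring
    _ = (2 * i) * a := by rw [this]
    _ = _ := by ring
  have hC' : (2 * i) * a = i * 2 ^ (L + 1 - ℓ) := by rw [hexp]; ring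
  set A := (2 * i - 1 - 1) * a with hAd
  set B := (2 * i - 1) * a with hBd
  set C := (2 * i) * a with hCd
  rw [hA, ← hC']
  by_cases h1 : A ≤ (n : ℕ) ∧ (n : ℕ) < B
  · rw [if_pos h1, if_pos (by omega : A ≤ (n:ℕ) ∧ (n:ℕ) < C), if_neg (by omega : ¬(B ≤ (n:ℕ) ∧ (n:ℕ) < C)), add_zero]
  · by_cases h2 : B ≤ (n : ℕ) ∧ (n : ℕ) < C
    · rw [if_pos (by omega : A ≤ (n:ℕ) ∧ (n:ℕ) < C), if_neg h1, zero_add, if_pos h2]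
    · rw [if_neg (by omega : ¬(A ≤ (n:ℕ) ∧ (n:ℕ) < C)), if_neg h1, if_neg h2, add_zero]

lemma cos_sin_splitAngle (L : ℕ) (c : Fin (2 ^ L) → ℂ) (ℓ i : ℕ) (hℓ : ℓ ≤ L) (hi : 1 ≤ i) :
    (Real.cos (splitAngle L c ℓ i)) * rnorm L c ℓ i = rnorm L c (ℓ + 1) (2 * i - 1) ∧
    (Real.sin (splitAngle L c ℓ i)) * rnorm L c ℓ i = rnorm L c (ℓ + 1) (2 * i) := by
  set r := rnorm L c ℓ i with hr
  set a := rnorm L c (ℓ + 1) (2 * i - 1) with hab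
  set b := rnorm L c (ℓ + 1) (2 * i) with hbd
  have hr0 : 0 ≤ r := rnorm_nonneg _ _ _ _
  have ha0 : 0 ≤ a := rnorm_nonneg _ _ _ _
  have hb0 : 0 ≤ b := rnorm_nonneg _ _ _ _
  have hpyth : r ^ 2 = a ^ 2 + b ^ 2 := rnorm_sq_split L c ℓ i hℓ hi
  by_cases hz : r = 0
  · have ha : a = 0 := by nlinarith
    have hb : b = 0 := by nlinarith
    rw [splitAngle, ← hr, if_pos hz, hz, ha, hb]
    simp
  · rw [splitAngle, ← hr, if_neg hz, atan2, ← hab, ← hbd]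
    set z : ℂ := (a : ℂ) + (b : ℂ) * Complex.I with hzdef
    have habs : ‖z‖ = r := by
      rw [hzdef, Complex.norm_def, Complex.normSq_add_mul_I]
      rw [← hpyth]
      exact Real.sqrt_sq hr0
    have hzne : z ≠ 0 := by
      intro h
      rw [h] at habs
      simp at habs
      exact hz habs.symm
    have hre : z.re = a := by simp [hzdef]
    have him : z.im = b := by simp [hzdef]
    constructor
    · rw [Complex.cos_arg hzne, hre, habs]
      field_simp
    · rw [Complex.sin_arg, him, habs]
      field_simp

def vat {N : ℕ} (v : Fin N → ℂ) (j : ℕ) : ℂ := if h : j < N then v ⟨j, h⟩ else 0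

lemma layer_suffix (L : ℕ) (α : ℕ → ℕ → ℝ) (ℓ : ℕ) (h1 : 1 ≤ ℓ) (h2 : ℓ ≤ L) :
    ∀ m k : ℕ, k + m = 2 ^ (ℓ - 1) → ∀ (v : Fin (2 ^ L) → ℂ) (u : Fin (2 ^ L)),
    ((List.ofFn fun i : Fin (2 ^ (ℓ - 1)) =>
        UsubN (2 ^ L) (pIdx L ℓ ((i : ℕ) + 1)) (qIdx L ℓ ((i : ℕ) + 1))
          (α ℓ ((i : ℕ) + 1))).drop k).prod.mulVec v u =
      if k * 2 ^ (L + 1 - ℓ) ≤ (u : ℕ) ∧ 2 ^ (L - ℓ) ∣ (u : ℕ) then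
        (if 2 ^ (L + 1 - ℓ) ∣ (u : ℕ) then
          (Real.cos (α ℓ ((u : ℕ) / 2 ^ (L + 1 - ℓ) + 1)) : ℂ) *
              vat v (pIdx L ℓ ((u : ℕ) / 2 ^ (L + 1 - ℓ) + 1)) +
            Complex.I * Real.sin (α ℓ ((u : ℕ) / 2 ^ (L + 1 - ℓ) + 1)) *
              vat v (qIdx L ℓ ((u : ℕ) / 2 ^ (L + 1 - ℓ) + 1))
        else
          Complex.I * Real.sin (α ℓ ((u : ℕ) / 2 ^ (L + 1 - ℓ) + 1)) *
              vat v (pIdx L ℓ ((u : ℕ) / 2 ^ (L + 1 - ℓ) + 1)) +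
            (Real.cos (α ℓ ((u : ℕ) / 2 ^ (L + 1 - ℓ) + 1)) : ℂ) *
              vat v (qIdx L ℓ ((u : ℕ) / 2 ^ (L + 1 - ℓ) + 1)))
      else v u := by
  set s : ℕ := 2 ^ (L - ℓ) with hs
  have hss : 2 ^ (L + 1 - ℓ) = 2 * s := by
    rw [hs, ← pow_succ']
    congr 1
    omega
  have hspos : 0 < s := Nat.pow_pos (by norm_num)
  have hNeq : 2 ^ (ℓ - 1) * (2 * s) = 2 ^ L := by
    rw [hs, ← pow_succ']
    rw [← pow_add]
    congr 1
    omega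
  intro m
  induction m with
  | zero =>
    intro k hk v u
    have hlen : ((List.ofFn fun i : Fin (2 ^ (ℓ - 1)) =>
        UsubN (2 ^ L) (pIdx L ℓ ((i : ℕ) + 1)) (qIdx L ℓ ((i : ℕ) + 1))
          (α ℓ ((i : ℕ) + 1))).drop k) = [] := by
      apply List.drop_eq_nil_of_le
      rw [List.length_ofFn]
      omega
    rw [hlen, List.prod_nil, Matrix.one_mulVec]
    rw [if_neg]
    rw [hss]
    intro hcon
    have : 2 ^ L ≤ (u : ℕ) := by
      calc 2 ^ L = 2 ^ (ℓ - 1) * (2 * s) := hNeq.symm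
      _ = k * (2 * s) := by rw [← hk, Nat.add_zero]
      _ ≤ (u : ℕ) := hcon.1
    exact absurd u.isLt (by omega)
  | succ m ih =>
    intro k hk v u
    have hkK : k < 2 ^ (ℓ - 1) := by omega
    have hplt : k * (2 * s) + 2 * s ≤ 2 ^ L := by
      calc k * (2 * s) + 2 * s = (k + 1) * (2 * s) := by ring
      _ ≤ 2 ^ (ℓ - 1) * (2 * s) := Nat.mul_le_mul_right _ (by omega)
      _ = 2 ^ L := hNeq
    have hpv : pIdx L ℓ (k + 1) = k * (2 * s) := by
      rw [pIdx, hss]; simp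
    have hqv : qIdx L ℓ (k + 1) = k * (2 * s) + s := by
      rw [qIdx, hpv, ← hs]
    have hm : pIdx L ℓ (k + 1) < 2 ^ L := by omega
    have hn : qIdx L ℓ (k + 1) < 2 ^ L := by omega
    have hmn : pIdx L ℓ (k + 1) ≠ qIdx L ℓ (k + 1) := by omega
    have hdrop : ((List.ofFn fun i : Fin (2 ^ (ℓ - 1)) =>
        UsubN (2 ^ L) (pIdx L ℓ ((i : ℕ) + 1)) (qIdx L ℓ ((i : ℕ) + 1))
          (α ℓ ((i : ℕ) + 1))).drop k) =
        UsubN (2 ^ L) (pIdx L ℓ (k + 1)) (qIdx L ℓ (k + 1)) (α ℓ (k + 1)) ::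
        ((List.ofFn fun i : Fin (2 ^ (ℓ - 1)) =>
          UsubN (2 ^ L) (pIdx L ℓ ((i : ℕ) + 1)) (qIdx L ℓ ((i : ℕ) + 1))
            (α ℓ ((i : ℕ) + 1))).drop (k + 1)) := by
      rw [List.drop_eq_getElem_cons (by rw [List.length_ofFn]; exact hkK)]
      congr 1
      simp
    rw [hdrop, List.prod_cons, ← Matrix.mulVec_mulVec]
    have ihk : k + 1 + m = 2 ^ (ℓ - 1) := by omega
    -- inner vector values at p and q
    have hwp : ((List.ofFn fun i : Fin (2 ^ (ℓ - 1)) =>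
        UsubN (2 ^ L) (pIdx L ℓ ((i : ℕ) + 1)) (qIdx L ℓ ((i : ℕ) + 1))
          (α ℓ ((i : ℕ) + 1))).drop (k + 1)).prod.mulVec v ⟨pIdx L ℓ (k + 1), hm⟩
        = v ⟨pIdx L ℓ (k + 1), hm⟩ := by
      rw [ih (k + 1) ihk v]
      rw [if_neg]
      rw [hss]
      intro hcon
      have hc : (k + 1) * (2 * s) ≤ pIdx L ℓ (k + 1) := hcon.1
      have hexpand : (k + 1) * (2 * s) = k * (2 * s) + 2 * s := by ring
      omega
    have hwq : ((List.ofFn fun i : Fin (2 ^ (ℓ - 1)) =>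
        UsubN (2 ^ L) (pIdx L ℓ ((i : ℕ) + 1)) (qIdx L ℓ ((i : ℕ) + 1))
          (α ℓ ((i : ℕ) + 1))).drop (k + 1)).prod.mulVec v ⟨qIdx L ℓ (k + 1), hn⟩
        = v ⟨qIdx L ℓ (k + 1), hn⟩ := by
      rw [ih (k + 1) ihk v]
      rw [if_neg]
      rw [hss]
      intro hcon
      have hc : (k + 1) * (2 * s) ≤ qIdx L ℓ (k + 1) := hcon.1
      have hexpand : (k + 1) * (2 * s) = k * (2 * s) + 2 * s := by ring
      omega
    rw [UsubN_mulVec hm hn hmn]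
    by_cases hup : (u : ℕ) = pIdx L ℓ (k + 1)
    · rw [if_pos hup, hwp, hwq]
      have hub : (u : ℕ) = k * (2 * s) := by rw [hup, hpv]
      have hcond : k * 2 ^ (L + 1 - ℓ) ≤ (u : ℕ) ∧ s ∣ (u : ℕ) := by
        constructor
        · rw [hss, hub]
        · rw [hub]; exact ⟨2 * k, by ring⟩
      rw [if_pos hcond, if_pos (by rw [hss, hub]; exact ⟨k, by ring⟩)]
      have hdiv : (u : ℕ) / 2 ^ (L + 1 - ℓ) + 1 = k + 1 := by
        rw [hss, hub, Nat.mul_div_cancel _ (by omega)]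
      rw [hdiv]
      rw [vat, vat, dif_pos hm, dif_pos hn]
    · by_cases huq : (u : ℕ) = qIdx L ℓ (k + 1)
      · rw [if_neg hup, if_pos huq, hwp, hwq]
        have hub : (u : ℕ) = k * (2 * s) + s := by rw [huq, hqv]
        have hcond : k * 2 ^ (L + 1 - ℓ) ≤ (u : ℕ) ∧ s ∣ (u : ℕ) := by
          constructor
          · rw [hss]; omega
          · rw [hub]; exact ⟨2 * k + 1, by ring⟩
        rw [if_pos hcond, if_neg]
        · have hdiv : (u : ℕ) / 2 ^ (L + 1 - ℓ) + 1 = k + 1 := by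
            rw [hss, hub]
            have h5 : k * (2 * s) + s = 2 * s * k + s := by ring
            rw [h5, Nat.mul_add_div (by omega : 0 < 2 * s)]
            rw [Nat.div_eq_of_lt (by omega : s < 2 * s)]
          rw [hdiv]
          rw [vat, vat, dif_pos hm, dif_pos hn]
        · rw [hss, hub]
          rintro ⟨t, ht⟩
          have h6 : s * (2 * k + 1) = s * (2 * t) := by
            calc s * (2 * k + 1) = k * (2 * s) + s := by ring
            _ = 2 * s * t := ht
            _ = s * (2 * t) := by ring
          have := Nat.eq_of_mul_eq_mul_left hspos h6
          omega
      · rw [if_neg hup, if_neg huq]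
        rw [ih (k + 1) ihk v u]
        by_cases hc1 : (k + 1) * 2 ^ (L + 1 - ℓ) ≤ (u : ℕ) ∧ s ∣ (u : ℕ)
        · have hcc : k * 2 ^ (L + 1 - ℓ) ≤ (u : ℕ) ∧ s ∣ (u : ℕ) :=
            ⟨le_trans (Nat.mul_le_mul_right _ (by omega)) hc1.1, hc1.2⟩
          rw [if_pos hc1, if_pos hcc]
        · rw [if_neg hc1]
          by_cases hc2 : k * 2 ^ (L + 1 - ℓ) ≤ (u : ℕ) ∧ s ∣ (u : ℕ)
          · exfalso
            obtain ⟨t, ht⟩ := hc2.2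
            have h1 : k * (2 * s) ≤ s * t := by rw [← ht, ← hss]; exact hc2.1
            have h2 : s * t < (k + 1) * (2 * s) := by
              by_contra hcon
              push_neg at hcon
              exact hc1 ⟨by rw [hss, ht]; omega, hc2.2⟩
            have ht1 : 2 * k ≤ t := by
              have : s * (2 * k) ≤ s * t := by calc s * (2 * k) = k * (2 * s) := by ring
                                                 _ ≤ s * t := h1
              exact Nat.le_of_mul_le_mul_left this hspos
            have ht2 : t < 2 * k + 2 := by
              have : s * t < s * (2 * k + 2) := by
                calc s * t < (k + 1) * (2 * s) := h2
                _ = s * (2 * k + 2) := by ring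
              exact Nat.lt_of_mul_lt_mul_left this
            have ht3 : t = 2 * k ∨ t = 2 * k + 1 := by omega
            rcases ht3 with ht3 | ht3
            · exact hup (by rw [ht, ht3, hpv]; ring)
            · exact huq (by rw [ht, ht3, hqv]; ring)
          · rw [if_neg hc2]

noncomputable def vstate (L : ℕ) (c : Fin (2 ^ L) → ℂ) (t : ℕ) : Fin (2 ^ L) → ℂ :=
  fun n => if 2 ^ (L - t) ∣ (n : ℕ) then
    Complex.I ^ ((Nat.digits 2 ((n : ℕ) / 2 ^ (L - t))).sum) *
      ((rnorm L c (t + 1) ((n : ℕ) / 2 ^ (L - t) + 1) : ℝ) : ℂ)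
  else 0

lemma wsum_double (m : ℕ) : (Nat.digits 2 (2 * m)).sum = (Nat.digits 2 m).sum := by
  rcases Nat.eq_zero_or_pos m with h | h
  · simp [h]
  · rw [Nat.digits_def' (by norm_num : (1:ℕ) < 2) (by omega : 0 < 2 * m)]
    simp [Nat.mul_div_cancel_left m (by norm_num : 0 < 2), Nat.mul_mod_right]

lemma wsum_double_add_one (m : ℕ) :
    (Nat.digits 2 (2 * m + 1)).sum = (Nat.digits 2 m).sum + 1 := by
  rw [Nat.digits_def' (by norm_num : (1:ℕ) < 2) (by omega : 0 < 2 * m + 1)]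
  have h1 : (2 * m + 1) % 2 = 1 := by omega
  have h2 : (2 * m + 1) / 2 = m := by omega
  rw [h1, h2]
  simp [add_comm]

lemma layer_step (L : ℕ) (c : Fin (2 ^ L) → ℂ) (ℓ : ℕ) (h1 : 1 ≤ ℓ) (h2 : ℓ ≤ L) :
    (layerU L (splitAngle L c) ℓ).mulVec (vstate L c (ℓ - 1)) = vstate L c ℓ := by
  funext u
  set s : ℕ := 2 ^ (L - ℓ) with hs
  have hss : 2 ^ (L + 1 - ℓ) = 2 * s := by
    rw [hs, ← pow_succ']; congr 1; omega
  have hsprev : 2 ^ (L - (ℓ - 1)) = 2 * s := by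
    rw [hs, ← pow_succ']; congr 1; omega
  have hspos : 0 < s := Nat.pow_pos (by norm_num)
  have hNeq : 2 ^ (ℓ - 1) * (2 * s) = 2 ^ L := by
    rw [hs, ← pow_succ', ← pow_add]; congr 1; omega
  have key := layer_suffix L (splitAngle L c) ℓ h1 h2 (2 ^ (ℓ - 1)) 0 (by omega)
    (vstate L c (ℓ - 1)) u
  rw [List.drop_zero] at key
  rw [layerU, key]
  by_cases hdvd : s ∣ (u : ℕ)
  · rw [if_pos ⟨by omega, hdvd⟩]
    set j : ℕ := (u : ℕ) / (2 * s) with hj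
    have hj2 : (u : ℕ) / 2 ^ (L + 1 - ℓ) = j := by rw [hss]
    have hpval : pIdx L ℓ (j + 1) = j * (2 * s) := by
      rw [pIdx, hss]; simp
    have hqval : qIdx L ℓ (j + 1) = j * (2 * s) + s := by rw [qIdx, hpval, ← hs]
    have hple : j * (2 * s) ≤ (u : ℕ) := by
      rw [hj]; exact Nat.div_mul_le_self _ _
    have hjlt : j < 2 ^ (ℓ - 1) := by
      rw [hj]
      apply Nat.div_lt_of_lt_mul
      calc (u : ℕ) < 2 ^ L := u.isLt
      _ = 2 * s * 2 ^ (ℓ - 1) := by rw [← hNeq]; ring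
    have hqlt : j * (2 * s) + 2 * s ≤ 2 ^ L := by
      calc j * (2 * s) + 2 * s = (j + 1) * (2 * s) := by ring
      _ ≤ 2 ^ (ℓ - 1) * (2 * s) := Nat.mul_le_mul_right _ (by omega)
      _ = 2 ^ L := hNeq
    have hplt : pIdx L ℓ (j + 1) < 2 ^ L := by rw [hpval]; omega
    have hqlt' : qIdx L ℓ (j + 1) < 2 ^ L := by rw [hqval]; omega
    -- value at p
    have hvp : vat (vstate L c (ℓ - 1)) (pIdx L ℓ (j + 1)) =
        Complex.I ^ ((Nat.digits 2 j).sum) * ((rnorm L c ℓ (j + 1) : ℝ) : ℂ) := by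
      rw [vat, dif_pos hplt, vstate]
      simp only [Fin.val_mk]
      rw [hpval, if_pos (by rw [hsprev]; exact ⟨j, by ring⟩)]
      rw [hsprev, Nat.mul_div_cancel _ (by omega : 0 < 2 * s)]
      have : ℓ - 1 + 1 = ℓ := by omega
      rw [this]
    have hvq : vat (vstate L c (ℓ - 1)) (qIdx L ℓ (j + 1)) = 0 := by
      rw [vat, dif_pos hqlt', vstate]
      simp only [Fin.val_mk]
      rw [hqval, if_neg]
      rw [hsprev]
      rintro ⟨t, ht⟩
      have h6 : s * (2 * j + 1) = s * (2 * t) := by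
        calc s * (2 * j + 1) = j * (2 * s) + s := by ring
        _ = 2 * s * t := ht
        _ = s * (2 * t) := by ring
      have := Nat.eq_of_mul_eq_mul_left hspos h6
      omega
    have hcs := cos_sin_splitAngle L c ℓ (j + 1) h2 (Nat.le_add_left 1 j)
    by_cases h2s : 2 ^ (L + 1 - ℓ) ∣ (u : ℕ)
    · -- u = j * 2s
      have h2s' : (2 * s) ∣ (u : ℕ) := hss ▸ h2s
      have hueq : (u : ℕ) = j * (2 * s) := by
        rw [hj]
        exact (Nat.div_mul_cancel h2s').symm
      rw [if_pos h2s, hj2, hvp, hvq, mul_zero, add_zero]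
      -- RHS
      have hudivs : (u : ℕ) / s = 2 * j := by
        rw [hueq]
        have : j * (2 * s) = s * (2 * j) := by ring
        rw [this, Nat.mul_div_cancel_left _ hspos]
      rw [vstate]
      rw [if_pos hdvd, hudivs, wsum_double]
      have hidx : 2 * j + 1 = 2 * (j + 1) - 1 := by omega
      rw [hidx, ← hcs.1]
      push_cast
      ring
    · -- u = j * 2s + s
      have humod : (u : ℕ) = j * (2 * s) + s := by
        obtain ⟨t, ht⟩ := hdvd
        have h7 : (u : ℕ) % (2 * s) = s * (t % 2) := by
          rw [ht, mul_comm 2 s]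
          exact Nat.mul_mod_mul_left s t 2
        have ht2 : t % 2 = 1 := by
          rcases Nat.mod_two_eq_zero_or_one t with h | h
          · exfalso
            apply h2s
            rw [hss, ht]
            obtain ⟨t2, ht2⟩ := (Nat.even_iff.mpr h)
            exact ⟨t2, by rw [ht2]; ring⟩
          · exact h
        have hmod : (u : ℕ) % (2 * s) = s := by rw [h7, ht2, mul_one]
        have hdm := Nat.div_add_mod (u : ℕ) (2 * s)
        rw [hmod, ← hj] at hdm
        rw [← hdm]
        ring
      rw [if_neg h2s, hj2, hvp, hvq, mul_zero, add_zero]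
      have hudivs : (u : ℕ) / s = 2 * j + 1 := by
        rw [humod]
        have : j * (2 * s) + s = s * (2 * j + 1) := by ring
        rw [this, Nat.mul_div_cancel_left _ hspos]
      rw [vstate]
      rw [if_pos hdvd, hudivs, wsum_double_add_one]
      have hidx : 2 * j + 2 = 2 * (j + 1) := by omega
      rw [hidx, ← hcs.2]
      push_cast
      ring
  · rw [if_neg (by intro h; exact hdvd h.2)]
    rw [vstate, vstate]
    rw [if_neg, if_neg hdvd]
    rw [hsprev]
    intro hcon
    exact hdvd (dvd_trans ⟨2, by ring⟩ hcon)

lemma chain (L : ℕ) (c : Fin (2 ^ L) → ℂ) :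
    ∀ t : ℕ, t ≤ L →
    (List.ofFn fun ℓ : Fin t => layerU L (splitAngle L c) (t - (ℓ : ℕ))).prod.mulVec
      (vstate L c 0) = vstate L c t := by
  intro t
  induction t with
  | zero => intro _; simp [Matrix.one_mulVec]
  | succ t ih =>
    intro ht
    rw [List.ofFn_succ]
    have htail : (fun i : Fin t =>
        (fun ℓ : Fin (t + 1) => layerU L (splitAngle L c) (t + 1 - (ℓ : ℕ))) i.succ) =
        fun i : Fin t => layerU L (splitAngle L c) (t - (i : ℕ)) := by
      funext i
      simp [Nat.succ_sub_succ]
    rw [htail, List.prod_cons, ← Matrix.mulVec_mulVec, ih (by omega)]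
    have := layer_step L c (t + 1) (by omega) (by omega)
    simpa using this

lemma e1_eq_vstate0 (L : ℕ) (c : Fin (2 ^ L) → ℂ) (hc : ∑ n, ‖c n‖ ^ 2 = 1) :
    e1 (2 ^ L) = vstate L c 0 := by
  funext n
  rw [e1, vstate]
  by_cases h : (n : ℕ) = 0
  · rw [if_pos h, if_pos (by rw [h]; exact Dvd.intro 0 rfl)]
    rw [h]
    rw [Nat.zero_div]
    simp only [Nat.digits_zero, List.sum_nil, pow_zero, one_mul, Nat.zero_add]
    have : rnorm L c 1 1 = 1 := by
      rw [rnorm]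
      have hcond : ∀ m : Fin (2 ^ L),
          ((1 - 1) * 2 ^ (L + 1 - 1) ≤ (m : ℕ) ∧ (m : ℕ) < 1 * 2 ^ (L + 1 - 1)) := by
        intro m
        constructor
        · simp
        · have : L + 1 - 1 = L := by omega
          rw [this, one_mul]
          exact m.isLt
      have : (∑ m : Fin (2 ^ L),
          if (1 - 1) * 2 ^ (L + 1 - 1) ≤ (m : ℕ) ∧ (m : ℕ) < 1 * 2 ^ (L + 1 - 1)
          then ‖c m‖ ^ 2 else 0) = ∑ m, ‖c m‖ ^ 2 := by
        apply Finset.sum_congr rfl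
        intro m _
        rw [if_pos (hcond m)]
      rw [this, hc, Real.sqrt_one]
    rw [this]
    norm_num
  · rw [if_neg h, if_neg]
    intro hcon
    rw [Nat.sub_zero] at hcon
    have := Nat.le_of_dvd (Nat.pos_of_ne_zero h) hcon
    exact absurd n.isLt (by omega)

lemma vstateL (L : ℕ) (c : Fin (2 ^ L) → ℂ) (n : Fin (2 ^ L)) :
    vstate L c L n = Complex.I ^ ((Nat.digits 2 (n : ℕ)).sum) * (‖c n‖ : ℂ) := by
  rw [vstate]
  have h0 : L - L = 0 := by omega
  rw [h0, pow_zero, Nat.div_one, if_pos (one_dvd _)]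
  congr 1
  have : rnorm L c (L + 1) ((n : ℕ) + 1) = ‖c n‖ := by
    rw [rnorm]
    have h1 : L + 1 - (L + 1) = 0 := by omega
    have hsum : (∑ m : Fin (2 ^ L),
        if ((n : ℕ) + 1 - 1) * 2 ^ (L + 1 - (L + 1)) ≤ (m : ℕ) ∧
           (m : ℕ) < ((n : ℕ) + 1) * 2 ^ (L + 1 - (L + 1))
        then ‖c m‖ ^ 2 else 0) = ∑ m : Fin (2 ^ L), if m = n then ‖c m‖ ^ 2 else 0 := by
      apply Finset.sum_congr rfl
      intro m _
      rw [h1, pow_zero, mul_one, mul_one]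
      by_cases hmn : m = n
      · rw [if_pos (by rw [hmn]; omega), if_pos hmn]
      · rw [if_neg, if_neg hmn]
        intro hcon
        exact hmn (Fin.ext (by omega))
    rw [hsum, Finset.sum_ite_eq', if_pos (Finset.mem_univ n)]
    exact Real.sqrt_sq (norm_nonneg _)
  rw [this]

lemma phase_fix (z : ℂ) (w : ℕ) :
    Complex.exp (Complex.I * ((z.arg - Real.pi / 2 * (w : ℝ) : ℝ) : ℂ)) *
      (Complex.I ^ w * ((‖z‖ : ℝ) : ℂ)) = z := by
  have hI : Complex.I = Complex.exp (((Real.pi / 2 : ℝ) : ℂ) * Complex.I) := by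
    rw [Complex.exp_mul_I, ← Complex.ofReal_cos, ← Complex.ofReal_sin,
      Real.cos_pi_div_two, Real.sin_pi_div_two]
    simp
  calc Complex.exp (Complex.I * ((z.arg - Real.pi / 2 * (w : ℝ) : ℝ) : ℂ)) *
      (Complex.I ^ w * ((‖z‖ : ℝ) : ℂ))
      = Complex.exp (Complex.I * ((z.arg - Real.pi / 2 * (w : ℝ) : ℝ) : ℂ)) *
        (Complex.exp ((w : ℂ) * (((Real.pi / 2 : ℝ) : ℂ) * Complex.I)) *
          ((‖z‖ : ℝ) : ℂ)) := by
        have hIw : Complex.I ^ w =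
            Complex.exp ((w : ℂ) * (((Real.pi / 2 : ℝ) : ℂ) * Complex.I)) := by
          conv_lhs => rw [hI]
          rw [← Complex.exp_nat_mul]
        rw [hIw]
  _ = Complex.exp (Complex.I * ((z.arg - Real.pi / 2 * (w : ℝ) : ℝ) : ℂ) +
        (w : ℂ) * (((Real.pi / 2 : ℝ) : ℂ) * Complex.I)) * ((‖z‖ : ℝ) : ℂ) := by
        rw [Complex.exp_add]; ring
  _ = Complex.exp ((z.arg : ℂ) * Complex.I) * ((‖z‖ : ℝ) : ℂ) := by
        congr 1
        push_cast
        ring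
  _ = z := by rw [mul_comm]; exact Complex.norm_mul_exp_arg_mul_I z

theorem exact_state_preparation (L : ℕ) (hL : 1 ≤ L) (c : Fin (2 ^ L) → ℂ)
    (hc : ∑ n, ‖c n‖ ^ 2 = 1) :
    ∀ n : Fin (2 ^ L),
      Complex.exp (Complex.I * (phaseChoice L c n : ℝ)) *
        (Vmag L (splitAngle L c)).mulVec (e1 (2 ^ L)) n = c n := by
  intro n
  have hV : (Vmag L (splitAngle L c)).mulVec (e1 (2 ^ L)) = vstate L c L := by
    rw [Vmag, e1_eq_vstate0 L c hc]
    exact funext fun u => congrFun (chain L c L le_rfl) u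
  rw [hV, vstateL, phaseChoice]
  have := phase_fix (c n) ((Nat.digits 2 (n : ℕ)).sum)
  exact this
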